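/- The MPW solution satisfies balanced contributions: for every TUX game w on N and all players i, j ∈ N, MPW_i(w) − MPW_i(w_{−j}) = MPW_j(w) − MPW_j(w_{−i}). -/

import Mathlib

open Finset BigOperators

namespace TUX

/-- A (raw) game in partition function form: assigns a real worth to each
coalition together with a partition (of the outside players). -/
abbrev Game := Finset ℕ → Finset (Finset ℕ) → ℝ

/-- A TU game (characteristic function). -/
abbrev TUGame := Finset ℕ → ℝ

/-- A solution for TUX games: given a player set and a game, assigns payoffs. -/
abbrev Sol := Finset ℕ → Game → ℕ → ℝ

/-- `w` is a genuine TUX game: the empty coalition has worth 0. -/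
def IsTUX (w : Game) : Prop := ∀ π, w ∅ π = 0

/-- `π` is a partition of the finite set `M`. -/
def IsPartition (M : Finset ℕ) (π : Finset (Finset ℕ)) : Prop :=
  (∀ B ∈ π, B ⊆ M) ∧ ∅ ∉ π ∧ ∀ x ∈ M, (π.filter (fun B => x ∈ B)).card = 1

instance (M : Finset ℕ) : DecidablePred (IsPartition M) := fun π => by
  unfold IsPartition; infer_instance

/-- The finite set of all partitions of `M`. -/
def partitionsOf (M : Finset ℕ) : Finset (Finset (Finset ℕ)) :=
  (M.powerset.powerset).filter (IsPartition M)

/-- The Ewens(θ = 1) probability of the partition `π` of `M`: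
`p*_M(π) = ∏_{B ∈ π} (|B| - 1)! / |M|!`. -/
noncomputable def pstar (M : Finset ℕ) (π : Finset (Finset ℕ)) : ℝ :=
  (∏ B ∈ π, ((B.card - 1).factorial : ℝ)) / (M.card.factorial : ℝ)

/-- The block of `π` containing `j` (junk if `π` is not a partition containing `j`). -/
def blockOf (π : Finset (Finset ℕ)) (j : ℕ) : Finset ℕ :=
  (π.filter (fun B => j ∈ B)).sup id

/-- Add player `i` to the block `B` of `π`. -/
def addToBlock (π : Finset (Finset ℕ)) (i : ℕ) (B : Finset ℕ) : Finset (Finset ℕ) :=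
  insert (insert i B) (π.erase B)

/-- The restriction operator `r⋆` removing a single player `i` from a game on `N`:
`w₋ᵢ(S,π) = (1/(n-s)) (w(S, π₊ᵢ⇝∅) + ∑_{j ∈ N∖(S∪{i})} w(S, π₊ᵢ⇝π(j)))`. -/
noncomputable def restrict1 (N : Finset ℕ) (w : Game) (i : ℕ) : Game :=
  fun S π =>
    ((N.card : ℝ) - (S.card : ℝ))⁻¹ *
      (w S (insert {i} π) + ∑ j ∈ (N \ S).erase i, w S (addToBlock π i (blockOf π j)))

/-- Iterated removal of a list of players. -/
noncomputable def restrictL : Finset ℕ → Game → List ℕ → Game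
  | _, w, [] => w
  | N, w, i :: l => restrictL (N.erase i) (restrict1 N w i) l

/-- Removal of a set of players (via the increasing enumeration; by path
independence of `r⋆` the order is immaterial). -/
noncomputable def restrictSet (N : Finset ℕ) (w : Game) (T : Finset ℕ) : Game :=
  restrictL N w (T.sort (· ≤ ·))

/-- The average TU game `v̄_w` of a TUX game `w` on `N`. -/
noncomputable def avg (N : Finset ℕ) (w : Game) : TUGame :=
  fun S => ∑ π ∈ partitionsOf (N \ S), pstar (N \ S) π * w S π

/-- The auxiliary TU game `v*_w(S) = w₋(N∖S)(S,∅)`. -/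
noncomputable def auxGame (N : Finset ℕ) (w : Game) : TUGame :=
  fun S => restrictSet N w (N \ S) S ∅

/-- The Shapley value of a TU game on player set `N`. -/
noncomputable def shapley (N : Finset ℕ) (v : TUGame) (i : ℕ) : ℝ :=
  ∑ S ∈ (N.erase i).powerset,
    (((S.card.factorial : ℝ) * ((N.card - S.card - 1).factorial : ℝ)) / (N.card.factorial : ℝ)) *
      (v (insert i S) - v S)

/-- The MPW solution: the Shapley value of the average game. -/
noncomputable def MPW (N : Finset ℕ) (w : Game) (i : ℕ) : ℝ := shapley N (avg N w) i

/-- The MPW solution as a solution for TUX games. -/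
noncomputable def MPWsol : Sol := fun N w i => MPW N w i

/-- The scaled Dirac TUX game `δ_{T,τ}` on `N`. -/
noncomputable def scaledDirac (N T : Finset ℕ) (τ : Finset (Finset ℕ)) : Game :=
  fun S π => if S = T ∧ π = τ then (pstar (N \ T) τ)⁻¹ else 0

/-- `τ₋S`: remove the players of `S` from each block of `τ`, discarding empty blocks. -/
def partRemove (τ : Finset (Finset ℕ)) (S : Finset ℕ) : Finset (Finset ℕ) :=
  (τ.image (fun B => B \ S)).erase ∅

/-- The Sobolev-reduced TUX game `w₋ⱼ^{So,φ}` on `N ∖ {j}`. -/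
noncomputable def sobRed (N : Finset ℕ) (φ : Sol) (w : Game) (j : ℕ) : Game :=
  fun S π =>
    ((S.card : ℝ) / ((N.card : ℝ) - 1)) * (w (insert j S) π - φ N w j) +
      (1 - (S.card : ℝ) / ((N.card : ℝ) - 1)) * restrict1 N w j S π

/-- The Hart–Mas-Colell reduced TUX game `w₋T^{HM,φ}` on `N ∖ T`. -/
noncomputable def hmRed (N : Finset ℕ) (φ : Sol) (w : Game) (T : Finset ℕ) : Game :=
  fun S π => w (S ∪ T) π - ∑ j ∈ T, φ (S ∪ T) (restrictSet N w (N \ (S ∪ T))) j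

/-- Efficiency for TUX games. -/
def EfficientX (φ : Sol) : Prop :=
  ∀ (N : Finset ℕ) (w : Game), IsTUX w → ∑ i ∈ N, φ N w i = w N ∅

/-- Balanced contributions for TUX games (w.r.t. the restriction operator `r⋆`). -/
def BalancedContributionsX (φ : Sol) : Prop :=
  ∀ (N : Finset ℕ) (w : Game), IsTUX w → ∀ i ∈ N, ∀ j ∈ N,
    φ N w i - φ (N.erase j) (restrict1 N w j) i
      = φ N w j - φ (N.erase i) (restrict1 N w i) j

/-- 2-standardness for TUX games. -/
def TwoStandardX (φ : Sol) : Prop :=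
  ∀ i j : ℕ, i ≠ j → ∀ w : Game, IsTUX w →
    φ {i, j} w i
      = w {i} {({j} : Finset ℕ)}
        + (w {i, j} ∅ - w {j} {({i} : Finset ℕ)} - w {i} {({j} : Finset ℕ)}) / 2

/-- Sobolev consistency for TUX games. -/
def SobolevConsistentX (φ : Sol) : Prop :=
  ∀ (N : Finset ℕ) (w : Game), IsTUX w → ∀ i ∈ N, ∀ j ∈ N, i ≠ j →
    φ N w i = φ (N.erase j) (sobRed N φ w j) i

/-- Hart–Mas-Colell consistency (single-player removal) for TUX games. -/
def HMConsistentX (φ : Sol) : Prop :=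
  ∀ (N : Finset ℕ) (w : Game), IsTUX w → ∀ i ∈ N, ∀ j ∈ N, i ≠ j →
    φ N w i = φ (N.erase j) (hmRed N φ w {j}) i

/-- Set Hart–Mas-Colell consistency (removal of a coalition) for TUX games. -/
def SetHMConsistentX (φ : Sol) : Prop :=
  ∀ (N : Finset ℕ) (w : Game), IsTUX w → ∀ i ∈ N, ∀ T ⊆ N.erase i,
    φ N w i = φ (N \ T) (hmRed N φ w T) i

/-- The finite set of embedded coalitions `(T,τ)` of `N` with `T ≠ ∅`. -/
def embeddedNE (N : Finset ℕ) : Finset (Finset ℕ × Finset (Finset ℕ)) :=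
  (N.powerset ×ˢ N.powerset.powerset).filter
    (fun p => p.1.Nonempty ∧ IsPartition (N \ p.1) p.2)

end TUX

namespace TUX

open Finset

lemma mem_partitionsOf {M : Finset ℕ} {π : Finset (Finset ℕ)} :
    π ∈ partitionsOf M ↔ IsPartition M π := by
  simp only [partitionsOf, mem_filter, mem_powerset, and_iff_right_iff_imp]
  intro h B hB
  exact mem_powerset.2 (h.1 B hB)

lemma block_nonempty {M : Finset ℕ} {π : Finset (Finset ℕ)} (h : IsPartition M π)
    {B : Finset ℕ} (hB : B ∈ π) : B.Nonempty :=
  nonempty_iff_ne_empty.2 (by rintro rfl; exact h.2.1 hB)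

lemma filter_eq_blockOf {M : Finset ℕ} {π : Finset (Finset ℕ)} (h : IsPartition M π)
    {x : ℕ} (hx : x ∈ M) : π.filter (fun B => x ∈ B) = {blockOf π x} := by
  obtain ⟨C, hC⟩ := card_eq_one.1 (h.2.2 x hx)
  have : blockOf π x = C := by rw [blockOf, hC, sup_singleton]; rfl
  rw [this, hC]

lemma blockOf_mem {M : Finset ℕ} {π : Finset (Finset ℕ)} (h : IsPartition M π)
    {x : ℕ} (hx : x ∈ M) : blockOf π x ∈ π ∧ x ∈ blockOf π x := by
  have := filter_eq_blockOf h hx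
  have hmem : blockOf π x ∈ π.filter (fun B => x ∈ B) := by
    rw [this]; exact mem_singleton_self _
  exact ⟨(mem_filter.1 hmem).1, (mem_filter.1 hmem).2⟩

lemma blockOf_eq {M : Finset ℕ} {π : Finset (Finset ℕ)} (h : IsPartition M π)
    {x : ℕ} {B : Finset ℕ} (hB : B ∈ π) (hxB : x ∈ B) : blockOf π x = B := by
  have hx : x ∈ M := h.1 B hB hxB
  have hBf : B ∈ π.filter (fun B => x ∈ B) := mem_filter.2 ⟨hB, hxB⟩
  rw [filter_eq_blockOf h hx, mem_singleton] at hBf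
  exact hBf.symm

end TUX

namespace TUX

open Finset

section PartExt
variable {M : Finset ℕ} {π : Finset (Finset ℕ)} {j : ℕ}

lemma not_mem_block {B : Finset ℕ} (hM : j ∉ M) (h : IsPartition M π) (hB : B ∈ π) : j ∉ B :=
  fun hc => hM (h.1 B hB hc)

lemma singleton_not_mem (hM : j ∉ M) (h : IsPartition M π) : ({j} : Finset ℕ) ∉ π :=
  fun hc => not_mem_block hM h hc (mem_singleton_self j)

lemma isPartition_insert_singleton (hM : j ∉ M) (h : IsPartition M π) :
    IsPartition (insert j M) (insert {j} π) := by
  refine ⟨?_, ?_, ?_⟩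
  · intro B hB
    rcases mem_insert.1 hB with rfl | hB
    · simp
    · exact (h.1 B hB).trans (subset_insert _ _)
  · intro hc
    rcases mem_insert.1 hc with hc | hc
    · exact absurd hc.symm (singleton_ne_empty j)
    · exact h.2.1 hc
  · intro x hx
    rcases mem_insert.1 hx with rfl | hx
    · rw [filter_insert, if_pos (mem_singleton_self x)]
      have he : π.filter (fun B => x ∈ B) = ∅ :=
        filter_eq_empty_iff.2 (fun B hB => not_mem_block hM h hB)
      rw [he]
      simp
    · have hxj : x ≠ j := fun hc => hM (hc ▸ hx)
      rw [filter_insert, if_neg (by simp [hxj])]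
      exact h.2.2 x hx

lemma isPartition_addToBlock (hM : j ∉ M) (h : IsPartition M π) {B : Finset ℕ} (hB : B ∈ π) :
    IsPartition (insert j M) (addToBlock π j B) := by
  unfold addToBlock
  refine ⟨?_, ?_, ?_⟩
  · intro C hC
    rcases mem_insert.1 hC with rfl | hC
    · exact insert_subset_insert _ (h.1 B hB)
    · exact (h.1 C (mem_of_mem_erase hC)).trans (subset_insert _ _)
  · intro hc
    rcases mem_insert.1 hc with hc | hc
    · exact absurd hc.symm (insert_ne_empty _ _)
    · exact h.2.1 (mem_of_mem_erase hc)
  · intro x hx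
    rcases mem_insert.1 hx with rfl | hx
    · rw [filter_insert, if_pos (mem_insert_self x B)]
      have he : (π.erase B).filter (fun C => x ∈ C) = ∅ :=
        filter_eq_empty_iff.2 (fun C hC => not_mem_block hM h (mem_of_mem_erase hC))
      rw [he]
      simp
    · have hxj : x ≠ j := fun hc => hM (hc ▸ hx)
      rw [filter_insert, filter_erase, filter_eq_blockOf h hx]
      by_cases hxB : x ∈ B
      · rw [if_pos (mem_insert_of_mem hxB), blockOf_eq h hB hxB, erase_singleton]
        simp
      · rw [if_neg (by simp [hxj, hxB])]
        have hne : blockOf π x ≠ B := fun hc => hxB (hc ▸ (blockOf_mem h hx).2)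
        rw [erase_eq_of_notMem (fun hc => hne (mem_singleton.1 hc).symm)]
        simp

lemma isPartition_res_singleton {σ : Finset (Finset ℕ)} (hM : j ∉ M)
    (h : IsPartition (insert j M) σ) (hC : blockOf σ j = {j}) :
    IsPartition M (σ.erase {j}) := by
  refine ⟨?_, ?_, ?_⟩
  · intro B hB
    have hBσ := mem_of_mem_erase hB
    have hjB : j ∉ B := fun hjB => (mem_erase.1 hB).1 (by rw [← blockOf_eq h hBσ hjB, hC])
    intro x hxB
    rcases mem_insert.1 (h.1 B hBσ hxB) with rfl | hx
    · exact absurd hxB hjB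
    · exact hx
  · exact fun hc => h.2.1 (mem_of_mem_erase hc)
  · intro x hx
    have hxj : x ≠ j := fun hc => hM (hc ▸ hx)
    rw [filter_erase, filter_eq_blockOf h (mem_insert_of_mem hx)]
    have hne : blockOf σ x ≠ {j} := fun hc => hxj (by
      have := (blockOf_mem h (mem_insert_of_mem hx)).2
      rw [hc, mem_singleton] at this; exact this)
    rw [erase_eq_of_notMem (fun hc => hne (mem_singleton.1 hc).symm)]
    simp

lemma isPartition_res_block {σ : Finset (Finset ℕ)} (hM : j ∉ M)
    (h : IsPartition (insert j M) σ) (hC : blockOf σ j ≠ {j}) :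
    IsPartition M (insert ((blockOf σ j).erase j) (σ.erase (blockOf σ j))) := by
  have hCσ : blockOf σ j ∈ σ := (blockOf_mem h (mem_insert_self j M)).1
  have hjC : j ∈ blockOf σ j := (blockOf_mem h (mem_insert_self j M)).2
  have hB0ne : ((blockOf σ j).erase j).Nonempty := by
    rw [nonempty_iff_ne_empty]
    intro hc
    rcases (erase_eq_empty_iff _ _).1 hc with hc' | hc'
    · exact absurd (hc' ▸ hjC) (notMem_empty j)
    · exact hC hc'
  refine ⟨?_, ?_, ?_⟩
  · intro B hB
    rcases mem_insert.1 hB with rfl | hB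
    · intro x hx
      rcases mem_insert.1 (h.1 _ hCσ (mem_of_mem_erase hx)) with rfl | h'
      · exact absurd rfl (mem_erase.1 hx).1
      · exact h'
    · have hBσ := mem_of_mem_erase hB
      have hjB : j ∉ B := fun hjB => (mem_erase.1 hB).1 (blockOf_eq h hBσ hjB).symm
      intro x hxB
      rcases mem_insert.1 (h.1 B hBσ hxB) with rfl | hx
      · exact absurd hxB hjB
      · exact hx
  · intro hc
    rcases mem_insert.1 hc with hc | hc
    · exact absurd hc.symm (nonempty_iff_ne_empty.1 hB0ne)
    · exact h.2.1 (mem_of_mem_erase hc)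
  · intro x hx
    have hxj : x ≠ j := fun hc => hM (hc ▸ hx)
    rw [filter_insert, filter_erase, filter_eq_blockOf h (mem_insert_of_mem hx)]
    by_cases hxC : x ∈ blockOf σ j
    · rw [if_pos (mem_erase.2 ⟨hxj, hxC⟩), blockOf_eq h hCσ hxC, erase_singleton]
      simp
    · have hne : blockOf σ x ≠ blockOf σ j :=
        fun hc => hxC (hc ▸ (blockOf_mem h (mem_insert_of_mem hx)).2)
      rw [if_neg (fun hc => hxC (mem_of_mem_erase hc)),
        erase_eq_of_notMem (fun hc => hne (mem_singleton.1 hc).symm)]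
      simp

end PartExt

end TUX

namespace TUX

open Finset

section Pstar
variable {M : Finset ℕ} {π : Finset (Finset ℕ)} {j : ℕ}

lemma pstar_insert_singleton (hM : j ∉ M) (h : IsPartition M π) :
    pstar (insert j M) (insert {j} π) = pstar M π / ((M.card : ℝ) + 1) := by
  have hs : ({j} : Finset ℕ) ∉ π := singleton_not_mem hM h
  have hfac : ((M.card.factorial : ℝ)) ≠ 0 := Nat.cast_ne_zero.2 (Nat.factorial_ne_zero _)
  have hm1 : ((M.card : ℝ) + 1) ≠ 0 := by positivity
  unfold pstar
  rw [prod_insert hs, card_insert_of_notMem hM, Nat.factorial_succ]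
  simp only [card_singleton, Nat.sub_self, Nat.factorial_zero]
  push_cast
  rw [one_mul, div_div, mul_comm]

lemma pstar_addToBlock (hM : j ∉ M) (h : IsPartition M π) {B : Finset ℕ} (hB : B ∈ π) :
    pstar (insert j M) (addToBlock π j B)
      = (B.card : ℝ) * pstar M π / ((M.card : ℝ) + 1) := by
  have hjB : j ∉ B := not_mem_block hM h hB
  have hnotin : insert j B ∉ π.erase B :=
    fun hc => not_mem_block hM h (mem_of_mem_erase hc) (mem_insert_self j B)
  have hBpos : 0 < B.card := card_pos.2 (block_nonempty h hB)
  obtain ⟨b, hb⟩ : ∃ b, B.card = b + 1 := ⟨B.card - 1, by omega⟩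
  have hfac : ((M.card.factorial : ℝ)) ≠ 0 := Nat.cast_ne_zero.2 (Nat.factorial_ne_zero _)
  have hm1 : ((M.card : ℝ) + 1) ≠ 0 := by positivity
  unfold addToBlock pstar
  rw [prod_insert hnotin, card_insert_of_notMem hjB, card_insert_of_notMem hM,
    Nat.factorial_succ, ← mul_prod_erase π _ hB]
  simp only [Nat.add_sub_cancel, hb, Nat.factorial_succ]
  push_cast
  field_simp

/-- Splitting a sum over partitions of `insert j M` according to where `j` sits. -/
lemma sum_partition_split (hM : j ∉ M) (g : Finset (Finset ℕ) → ℝ) :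
    ∑ σ ∈ partitionsOf (insert j M), g σ
      = ∑ π ∈ partitionsOf M, (g (insert {j} π) + ∑ B ∈ π, g (addToBlock π j B)) := by
  classical
  have key : ∀ π ∈ partitionsOf M,
      g (insert {j} π) + ∑ B ∈ π, g (addToBlock π j B)
        = ∑ B ∈ insert ∅ π, g (if B = ∅ then insert {j} π else addToBlock π j B) := by
    intro π hπ
    rw [sum_insert (fun hc => (mem_partitionsOf.1 hπ).2.1 hc), if_pos rfl]
    congr 1
    refine sum_congr rfl fun B hB => ?_
    rw [if_neg (fun hc => (mem_partitionsOf.1 hπ).2.1 (by rw [← hc]; exact hB))]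
  rw [sum_congr rfl key,
    sum_sigma' (partitionsOf M) (fun π => insert ∅ π)
      (fun π B => g (if B = ∅ then insert {j} π else addToBlock π j B))]
  have linv : ∀ σ ∈ partitionsOf (insert j M),
      ((fun p : Σ _ : Finset (Finset ℕ), Finset ℕ =>
          if p.2 = ∅ then insert {j} p.1 else addToBlock p.1 j p.2)
        ((fun σ => if blockOf σ j = {j}
            then (⟨σ.erase {j}, ∅⟩ : Σ _ : Finset (Finset ℕ), Finset ℕ)
            else ⟨insert ((blockOf σ j).erase j) (σ.erase (blockOf σ j)),
              (blockOf σ j).erase j⟩) σ)) = σ := by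
    intro σ hσ
    have h := mem_partitionsOf.1 hσ
    have hCσ : blockOf σ j ∈ σ := (blockOf_mem h (mem_insert_self j M)).1
    have hjC : j ∈ blockOf σ j := (blockOf_mem h (mem_insert_self j M)).2
    dsimp only
    by_cases hC : blockOf σ j = {j}
    · rw [if_pos hC]
      dsimp only
      rw [if_pos rfl, insert_erase (hC ▸ hCσ)]
    · rw [if_neg hC]
      dsimp only
      have hB0ne : ((blockOf σ j).erase j) ≠ ∅ := by
        intro hc
        rcases (erase_eq_empty_iff _ _).1 hc with hc' | hc'
        · rw [hc'] at hjC; exact absurd hjC (notMem_empty j)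
        · exact hC hc'
      rw [if_neg hB0ne]
      unfold addToBlock
      have h1 : insert j ((blockOf σ j).erase j) = blockOf σ j := insert_erase hjC
      have h2 : ((blockOf σ j).erase j) ∉ σ.erase (blockOf σ j) := by
        intro hc
        obtain ⟨x, hx⟩ := nonempty_iff_ne_empty.2 hB0ne
        exact (mem_erase.1 hc).1
          (by rw [← blockOf_eq h (mem_of_mem_erase hc) hx, blockOf_eq h hCσ (mem_of_mem_erase hx)])
      rw [erase_insert h2, h1, insert_erase hCσ]
  refine sum_nbij'
    (i := fun σ => if blockOf σ j = {j}
      then (⟨σ.erase {j}, ∅⟩ : Σ _ : Finset (Finset ℕ), Finset ℕ)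
      else ⟨insert ((blockOf σ j).erase j) (σ.erase (blockOf σ j)), (blockOf σ j).erase j⟩)
    (j := fun p => if p.2 = ∅ then insert {j} p.1 else addToBlock p.1 j p.2)
    ?_ ?_ (fun σ hσ => linv σ hσ) ?_ (fun σ hσ => (congrArg g (linv σ hσ)).symm)
  · -- forward maps into the sigma set
    intro σ hσ
    have h := mem_partitionsOf.1 hσ
    by_cases hC : blockOf σ j = {j}
    · rw [if_pos hC]
      exact mem_sigma.2 ⟨mem_partitionsOf.2 (isPartition_res_singleton hM h hC),
        mem_insert_self _ _⟩
    · rw [if_neg hC]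
      exact mem_sigma.2 ⟨mem_partitionsOf.2 (isPartition_res_block hM h hC),
        mem_insert_of_mem (mem_insert_self _ _)⟩
  · -- backward maps into partitions
    rintro ⟨π, B⟩ hp
    obtain ⟨hπ, hB⟩ := mem_sigma.1 hp
    have h := mem_partitionsOf.1 hπ
    dsimp only at hB ⊢
    rcases mem_insert.1 hB with rfl | hB'
    · rw [if_pos rfl]
      exact mem_partitionsOf.2 (isPartition_insert_singleton hM h)
    · have hBne : B ≠ ∅ := fun hc => h.2.1 (by rw [← hc]; exact hB')
      rw [if_neg hBne]
      exact mem_partitionsOf.2 (isPartition_addToBlock hM h hB')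
  · -- right inverse
    rintro ⟨π, B⟩ hp
    obtain ⟨hπ, hB⟩ := mem_sigma.1 hp
    have h := mem_partitionsOf.1 hπ
    dsimp only at hB ⊢
    rcases mem_insert.1 hB with rfl | hB'
    · rw [if_pos rfl]
      have hbl : blockOf (insert {j} π) j = {j} :=
        blockOf_eq (isPartition_insert_singleton hM h) (mem_insert_self _ _) (mem_singleton_self j)
      rw [if_pos hbl, erase_insert (singleton_not_mem hM h)]
    · have hBne : B ≠ ∅ := fun hc => h.2.1 (by rw [← hc]; exact hB')
      have hjB : j ∉ B := not_mem_block hM h hB'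
      rw [if_neg hBne]
      have hmem : insert j B ∈ addToBlock π j B := mem_insert_self _ _
      have hbl : blockOf (addToBlock π j B) j = insert j B :=
        blockOf_eq (isPartition_addToBlock hM h hB') hmem (mem_insert_self j B)
      have hne : blockOf (addToBlock π j B) j ≠ {j} := by
        rw [hbl]
        intro hc
        obtain ⟨x, hx⟩ := nonempty_iff_ne_empty.2 hBne
        have hx' : x ∈ ({j} : Finset ℕ) := by rw [← hc]; exact mem_insert_of_mem hx
        exact hjB ((mem_singleton.1 hx') ▸ hx)
      rw [if_neg hne, hbl, erase_insert hjB]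
      unfold addToBlock
      have h2 : insert j B ∉ π.erase B :=
        fun hc => not_mem_block hM h (mem_of_mem_erase hc) (mem_insert_self j B)
      rw [erase_insert h2, insert_erase hB']

end Pstar

end TUX

namespace TUX

open Finset

lemma avg_restrict1 (N : Finset ℕ) (w : Game) {j : ℕ} (hj : j ∈ N) {S : Finset ℕ}
    (hS : S ⊆ N.erase j) :
    avg (N.erase j) (restrict1 N w j) S = avg N w S := by
  classical
  set M := (N.erase j) \ S with hMdef
  have hjM : j ∉ M := by simp [hMdef]
  have hjS : j ∉ S := fun hc => (mem_erase.1 (hS hc)).1 rfl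
  have hS' : S ⊆ N := hS.trans (erase_subset _ _)
  have hMeq : N \ S = insert j M := by
    ext x
    simp only [hMdef, mem_sdiff, mem_insert, mem_erase]
    constructor
    · rintro ⟨hxN, hxS⟩
      by_cases hxj : x = j
      · exact Or.inl hxj
      · exact Or.inr ⟨⟨hxj, hxN⟩, hxS⟩
    · rintro (rfl | ⟨⟨hxj, hxN⟩, hxS⟩)
      · exact ⟨hj, hjS⟩
      · exact ⟨hxN, hxS⟩
  have hErase : (N \ S).erase j = M := by rw [hMeq, erase_insert hjM]
  have hcard : (N.card : ℝ) - (S.card : ℝ) = (M.card : ℝ) + 1 := by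
    have h1 : (N \ S).card = N.card - S.card := card_sdiff_of_subset hS'
    have h2 : (N \ S).card = M.card + 1 := by rw [hMeq, card_insert_of_notMem hjM]
    have h3 : S.card ≤ N.card := card_le_card hS'
    have h4 : N.card - S.card = M.card + 1 := by omega
    calc (N.card : ℝ) - (S.card : ℝ) = ((N.card - S.card : ℕ) : ℝ) := by
          rw [Nat.cast_sub h3]
      _ = ((M.card + 1 : ℕ) : ℝ) := by rw [h4]
      _ = (M.card : ℝ) + 1 := by push_cast; ring
  unfold avg restrict1
  rw [hMeq, ← hMdef, erase_insert hjM, sum_partition_split hjM (fun σ => pstar (insert j M) σ * w S σ)]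
  refine sum_congr rfl fun π hπ => ?_
  have h := mem_partitionsOf.1 hπ
  have hsum : ∑ k ∈ M, w S (addToBlock π j (blockOf π k))
      = ∑ B ∈ π, (B.card : ℝ) * w S (addToBlock π j B) := by
    have hbi : M = π.biUnion id := by
      ext x
      simp only [mem_biUnion, id]
      constructor
      · intro hx
        exact ⟨blockOf π x, (blockOf_mem h hx).1, (blockOf_mem h hx).2⟩
      · rintro ⟨B, hB, hxB⟩
        exact h.1 B hB hxB
    rw [hbi, sum_biUnion (fun B hB B' hB' hne => disjoint_left.2
      (fun x hxB hxB' => hne (by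
        rw [← blockOf_eq h (mem_coe.1 hB) hxB, blockOf_eq h (mem_coe.1 hB') hxB'])))]
    refine sum_congr rfl fun B hB => ?_
    rw [sum_congr rfl (fun k hk => by rw [blockOf_eq h hB hk]), sum_const, nsmul_eq_mul]
    simp only [id_eq]
  have hR : ∑ B ∈ π, pstar (insert j M) (addToBlock π j B) * w S (addToBlock π j B)
      = ∑ B ∈ π, (B.card : ℝ) * pstar M π / ((M.card : ℝ) + 1) * w S (addToBlock π j B) :=
    sum_congr rfl fun B hB => by rw [pstar_addToBlock hjM h hB]
  rw [hcard, hsum, pstar_insert_singleton hjM h, hR, mul_add, mul_add, mul_sum, mul_sum]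
  congr 1
  · rw [div_eq_mul_inv]
    ring
  · exact sum_congr rfl fun B hB => by rw [div_eq_mul_inv]; ring

lemma shapley_congr {N : Finset ℕ} {v v' : TUGame} (h : ∀ S ⊆ N, v S = v' S) {i : ℕ}
    (hi : i ∈ N) : shapley N v i = shapley N v' i := by
  unfold shapley
  refine sum_congr rfl fun S hS => ?_
  have h1 : S ⊆ N := (mem_powerset.1 hS).trans (erase_subset _ _)
  rw [h (insert i S) (insert_subset hi h1), h S h1]

lemma coef_identity (t c : ℕ) :
    (t.factorial : ℝ) * ((c + 1).factorial : ℝ) / ((t + c + 2).factorial : ℝ)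
      - (t.factorial : ℝ) * (c.factorial : ℝ) / ((t + c + 1).factorial : ℝ)
      = -(((t + 1).factorial : ℝ) * (c.factorial : ℝ) / ((t + c + 2).factorial : ℝ)) := by
  have h1 : ((t + c + 2).factorial : ℝ) = ((t : ℝ) + c + 2) * ((t + c + 1).factorial : ℝ) := by
    rw [show t + c + 2 = (t + c + 1) + 1 from rfl, Nat.factorial_succ]
    push_cast
    ring
  have h2 : ((c + 1).factorial : ℝ) = ((c : ℝ) + 1) * (c.factorial : ℝ) := by
    rw [Nat.factorial_succ]; push_cast; ring
  have h3 : (((t + 1)).factorial : ℝ) = ((t : ℝ) + 1) * (t.factorial : ℝ) := by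
    rw [Nat.factorial_succ]; push_cast; ring
  have hne : ((t + c + 1).factorial : ℝ) ≠ 0 := Nat.cast_ne_zero.2 (Nat.factorial_ne_zero _)
  have hne2 : ((t : ℝ) + c + 2) ≠ 0 := by positivity
  rw [h1, h2, h3]
  field_simp
  ring

end TUX

namespace TUX

open Finset

lemma shapley_diff (N : Finset ℕ) (v : TUGame) {i j : ℕ} (hi : i ∈ N) (hj : j ∈ N)
    (hij : i ≠ j) :
    shapley N v i - shapley (N.erase j) v i
      = ∑ T ∈ ((N.erase i).erase j).powerset,
          ((((T.card + 1).factorial : ℝ) * ((N.card - T.card - 2).factorial : ℝ))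
              / (N.card.factorial : ℝ))
            * (v (insert i (insert j T)) - v (insert j T) - v (insert i T) + v T) := by
  classical
  set A := (N.erase i).erase j with hA
  have hjNi : j ∈ N.erase i := mem_erase.2 ⟨Ne.symm hij, hj⟩
  have hjA : j ∉ A := notMem_erase j _
  have hNi : N.erase i = insert j A := (insert_erase hjNi).symm
  have hn2 : 2 ≤ N.card := one_lt_card.2 ⟨i, hi, j, hj, hij⟩
  have hcardA : A.card + 2 = N.card := by
    rw [hA, card_erase_of_mem hjNi, card_erase_of_mem hi]
    omega
  have hinj : ∀ x ∈ A.powerset, ∀ y ∈ A.powerset, insert j x = insert j y → x = y := by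
    intro x hx y hy hxy
    have hjx : j ∉ x := fun hc => hjA ((mem_powerset.1 hx) hc)
    have hjy : j ∉ y := fun hc => hjA ((mem_powerset.1 hy) hc)
    rw [← erase_insert hjx, ← erase_insert hjy, hxy]
  have hdisj : Disjoint A.powerset (A.powerset.image (insert j)) := by
    rw [disjoint_left]
    intro s hs hsi
    obtain ⟨x, hx, rfl⟩ := mem_image.1 hsi
    exact hjA ((mem_powerset.1 hs) (mem_insert_self j x))
  have e1 : shapley N v i
      = (∑ T ∈ A.powerset,
          ((T.card.factorial : ℝ) * ((N.card - T.card - 1).factorial : ℝ)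
              / (N.card.factorial : ℝ))
            * (v (insert i T) - v T))
        + ∑ T ∈ A.powerset,
          (((T.card + 1).factorial : ℝ) * ((N.card - (T.card + 1) - 1).factorial : ℝ)
              / (N.card.factorial : ℝ))
            * (v (insert i (insert j T)) - v (insert j T)) := by
    unfold shapley
    rw [hNi, powerset_insert, sum_union hdisj, sum_image hinj]
    congr 1
    refine sum_congr rfl fun T hT => ?_
    have hjT : j ∉ T := fun hc => hjA ((mem_powerset.1 hT) hc)
    rw [card_insert_of_notMem hjT]
  have e2 : shapley (N.erase j) v i
      = ∑ T ∈ A.powerset,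
          ((T.card.factorial : ℝ) * ((N.card - 1 - T.card - 1).factorial : ℝ)
              / ((N.card - 1).factorial : ℝ))
            * (v (insert i T) - v T) := by
    unfold shapley
    rw [show (N.erase j).erase i = A from erase_right_comm]
    simp only [card_erase_of_mem hj]
  rw [e1, e2, add_comm, add_sub_assoc, ← sum_sub_distrib, ← sum_add_distrib]
  refine sum_congr rfl fun T hT => ?_
  have ht : T.card ≤ A.card := card_le_card (mem_powerset.1 hT)
  obtain ⟨c, hc⟩ : ∃ c, N.card = T.card + c + 2 := ⟨N.card - T.card - 2, by omega⟩
  rw [hc, show T.card + c + 2 - T.card - 1 = c + 1 from by omega,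
    show T.card + c + 2 - (T.card + 1) - 1 = c from by omega,
    show T.card + c + 2 - 1 = T.card + c + 1 from by omega,
    show T.card + c + 1 - T.card - 1 = c from by omega,
    show T.card + c + 2 - T.card - 2 = c from by omega]
  linear_combination (v (insert i T) - v T) * coef_identity T.card c

lemma shapley_bc (N : Finset ℕ) (v : TUGame) {i j : ℕ} (hi : i ∈ N) (hj : j ∈ N)
    (hij : i ≠ j) :
    shapley N v i - shapley (N.erase j) v i = shapley N v j - shapley (N.erase i) v j := by
  rw [shapley_diff N v hi hj hij, shapley_diff N v hj hi (Ne.symm hij),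
    show (N.erase j).erase i = (N.erase i).erase j from erase_right_comm]
  refine sum_congr rfl fun T hT => ?_
  rw [Finset.insert_comm]
  ring

end TUX
open TUX in
/-- The MPW solution satisfies balanced contributions. -/
theorem MPW_balanced_contributions (N : Finset ℕ) (w : Game) (hw : IsTUX w)
    (i j : ℕ) (hi : i ∈ N) (hj : j ∈ N) :
    MPW N w i - MPW (N.erase j) (restrict1 N w j) i
      = MPW N w j - MPW (N.erase i) (restrict1 N w i) j := by
  rcases eq_or_ne i j with rfl | hij
  · rfl
  · have hbcI : MPW (N.erase j) (restrict1 N w j) i = shapley (N.erase j) (avg N w) i :=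
      shapley_congr (fun S hS => avg_restrict1 N w hj hS) (mem_erase.2 ⟨hij, hi⟩)
    have hbcJ : MPW (N.erase i) (restrict1 N w i) j = shapley (N.erase i) (avg N w) j :=
      shapley_congr (fun S hS => avg_restrict1 N w hi hS) (mem_erase.2 ⟨Ne.symm hij, hj⟩)
    rw [hbcI, hbcJ]
    exact shapley_bc N (avg N w) hi hj hij
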